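/- Let K be an ℕ-valued random variable whose PMF is f_K(k) = ∫_0^∞ ((μx)^k/k!) e^{-μx} f_U(x) dx with f_U(x) = (3.5^{4.5}/Γ(4.5)) x^{3.5} e^{-3.5x} and μ > 0. Then the expectation E[1/(K+1)] = Σ_{k=0}^∞ f_K(k)/(k+1) equals (1/μ)·[1 − (1 + μ/3.5)^{−3.5}]. -/

import Mathlib

open MeasureTheory Real
open scoped ENNReal NNReal

open Set in
lemma integrableOn_aux {s r : ℝ} (hs : 0 < s) (hr : 0 < r) :
    IntegrableOn (fun x : ℝ => x ^ (s - 1) * Real.exp (-(r * x))) (Set.Ioi 0) := by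
  have h1 := Real.GammaIntegral_convergent hs
  have h2 : IntegrableOn (fun x : ℝ => Real.exp (-(r * x)) * (r * x) ^ (s - 1)) (Ioi 0) := by
    have := (integrableOn_Ioi_comp_mul_left_iff
      (fun x : ℝ => Real.exp (-x) * x ^ (s - 1)) 0 hr).2
    simpa [mul_zero] using this (by simpa using h1)
  have h3 := h2.const_mul ((r ^ (s - 1))⁻¹)
  refine IntegrableOn.congr_fun h3 (fun x hx => ?_) measurableSet_Ioi
  have hx : (0:ℝ) < x := hx
  rw [Real.mul_rpow hr.le hx.le]
  field_simp [(Real.rpow_pos_of_pos hr (s-1)).ne']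

lemma hasSum_aux {y : ℝ} (hy : 0 < y) :
    HasSum (fun k : ℕ => y ^ k / ((k + 1).factorial : ℝ)) ((Real.exp y - 1) / y) := by
  have h : HasSum (fun n : ℕ => y ^ n / (n.factorial : ℝ)) (Real.exp y) := by
    rw [Real.exp_eq_exp_ℝ]
    exact NormedSpace.expSeries_div_hasSum_exp y
  have h1 : HasSum (fun n : ℕ => y ^ (n + 1) / ((n + 1).factorial : ℝ)) (Real.exp y - 1) := by
    have := (hasSum_nat_add_iff' (f := fun n : ℕ => y ^ n / (n.factorial : ℝ)) 1).2 h
    simpa using this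
  have h2 := h1.div_const y
  refine HasSum.congr_fun h2 fun k => ?_
  rw [pow_succ]
  field_simp

lemma algebra_div (a b e d g : ℝ) (hb : b ≠ 0) (hg : g ≠ 0) :
    a / b * e * d / g = a / (g * b) * e * d := by
  field_simp

lemma algebra_exp (u y d : ℝ) (hy : y ≠ 0) (hu : u ≠ 0) :
    (u - 1) / y * (u⁻¹ * d) = (1 - u⁻¹) / y * d := by
  field_simp

lemma algebra_cancel (A B G m : ℝ) (hG : G ≠ 0) (hm : m ≠ 0) :
    A / G / m * (B * G) = A * B / m := by
  field_simp

lemma algebra_split (c μ x p e1 E : ℝ) (hμ : μ ≠ 0) (hx : x ≠ 0) :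
    (1 - E) / (μ * x) * (c * (p * x) * e1)
      = c / μ * (p * e1) - c / μ * (p * (E * e1)) := by
  field_simp

open Set in
/-- Access probability E[1/(K+1)] for the mixed-Poisson number of contending users. -/
theorem access_probability (μ : ℝ) (hμ : 0 < μ) (fK : ℕ → ℝ)
    (hfK : ∀ k : ℕ, fK k = ∫ x in Set.Ioi (0:ℝ),
      ((μ * x) ^ k / (Nat.factorial k : ℝ)) * Real.exp (-(μ * x)) *
        ((3.5 : ℝ) ^ (4.5 : ℝ) / Real.Gamma 4.5 * x ^ (3.5 : ℝ) * Real.exp (-3.5 * x))) :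
    ∑' k : ℕ, fK k / (k + 1 : ℝ) = (1 / μ) * (1 - (1 + μ / 3.5) ^ (-(3.5 : ℝ))) := by
  set c : ℝ := (3.5 : ℝ) ^ (4.5 : ℝ) / Real.Gamma 4.5 with hc
  set D : ℝ → ℝ := fun x => c * x ^ (3.5 : ℝ) * Real.exp (-3.5 * x) with hD
  set F : ℕ → ℝ → ℝ := fun k x =>
    (μ * x) ^ k / ((k + 1).factorial : ℝ) * Real.exp (-(μ * x)) * D x with hF
  have hΓ : (0:ℝ) < Real.Gamma 3.5 := Real.Gamma_pos_of_pos (by norm_num)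
  have hG45 : Real.Gamma 4.5 = 3.5 * Real.Gamma 3.5 := by
    rw [show (4.5:ℝ) = 3.5 + 1 by norm_num, Real.Gamma_add_one (by norm_num)]
  have hcpos : 0 < c := by
    rw [hc]; positivity
  -- nonnegativity of D and F
  have hDnn : ∀ x : ℝ, 0 ≤ x → 0 ≤ D x := by
    intro x hx
    have := Real.rpow_nonneg hx (3.5:ℝ)
    positivity
  have hFnn : ∀ (k : ℕ) (x : ℝ), 0 < x → 0 ≤ F k x := by
    intro k x hx
    have h1 : 0 ≤ (μ * x) ^ k := pow_nonneg (by positivity) k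
    have h2 := hDnn x hx.le
    have h3 : (0:ℝ) < ((k+1).factorial : ℝ) := by positivity
    positivity
  -- measurability
  have hFm : ∀ k, Measurable (F k) := by
    intro k
    simp only [hF, hD]
    fun_prop
  -- step A : fK k / (k+1) = ∫ F k
  have hA : ∀ k : ℕ, fK k / (k + 1 : ℝ) = ∫ x in Ioi (0:ℝ), F k x := by
    intro k
    rw [hfK k, ← integral_div]
    refine setIntegral_congr_fun measurableSet_Ioi (fun x hx => ?_)
    have hk : ((k:ℝ) + 1) ≠ 0 := by positivity
    have hkf : ((k.factorial : ℝ)) ≠ 0 := by positivity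
    simp only [hF, hD]
    rw [Nat.factorial_succ]
    push_cast
    rw [algebra_div _ _ _ _ _ hkf hk]
  -- pointwise sum
  have hsum : ∀ x ∈ Ioi (0:ℝ), HasSum (fun k => F k x)
      ((1 - Real.exp (-(μ * x))) / (μ * x) * D x) := by
    intro x hx
    have hy : 0 < μ * x := mul_pos hμ hx
    have h2 : HasSum (fun k => F k x)
        ((Real.exp (μ * x) - 1) / (μ * x) * (Real.exp (-(μ * x)) * D x)) := by
      refine HasSum.congr_fun
        (HasSum.mul_right (Real.exp (-(μ * x)) * D x) (hasSum_aux hy)) fun k => ?_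
      simp only [hF]
      ring
    have heq : (Real.exp (μ * x) - 1) / (μ * x) * (Real.exp (-(μ * x)) * D x)
        = (1 - Real.exp (-(μ * x))) / (μ * x) * D x := by
      rw [Real.exp_neg]
      exact algebra_exp _ _ _ hy.ne' (Real.exp_ne_zero _)
    exact heq ▸ h2
  -- limit bound
  have hlim_le : ∀ x ∈ Ioi (0:ℝ),
      (1 - Real.exp (-(μ * x))) / (μ * x) * D x ≤ D x := by
    intro x hx
    have hy : 0 < μ * x := mul_pos hμ hx
    have h1 : (1 - Real.exp (-(μ * x))) / (μ * x) ≤ 1 := by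
      rw [div_le_one hy]
      linarith [Real.add_one_le_exp (-(μ * x))]
    exact mul_le_of_le_one_left (hDnn x (le_of_lt hx)) h1
  have hDint : IntegrableOn D (Ioi (0:ℝ)) := by
    have h := (integrableOn_aux (s := 4.5) (r := 3.5) (by norm_num) (by norm_num)).const_mul c
    refine IntegrableOn.congr_fun h (fun x hx => ?_) measurableSet_Ioi
    simp only [hD]
    rw [show (4.5:ℝ) - 1 = 3.5 by norm_num]
    ring_nf
  -- finiteness for integral_tsum
  have hf' : ∑' k, ∫⁻ x in Ioi (0:ℝ), ‖F k x‖₊ ≠ ⊤ := by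
    rw [← lintegral_tsum (fun k => ((hFm k).nnnorm.coe_nnreal_ennreal).aemeasurable)]
    have hb : ∀ x ∈ Ioi (0:ℝ), (∑' k, (‖F k x‖₊ : ℝ≥0∞)) ≤ (‖D x‖₊ : ℝ≥0∞) := by
      intro x hx
      have hps : ∀ s : Finset ℕ, ∑ k ∈ s, F k x ≤ D x := by
        intro s
        exact le_trans (sum_le_hasSum s (fun k _ => hFnn k x hx) (hsum x hx)) (hlim_le x hx)
      calc (∑' k, (‖F k x‖₊ : ℝ≥0∞)) = ∑' k, ENNReal.ofReal (F k x) := by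
            refine tsum_congr fun k => ?_
            rw [← ENNReal.ofReal_coe_nnreal, coe_nnnorm, Real.norm_eq_abs, abs_of_nonneg (hFnn k x hx)]
        _ ≤ ENNReal.ofReal (D x) := by
            rw [ENNReal.tsum_eq_iSup_sum]
            refine iSup_le fun s => ?_
            rw [← ENNReal.ofReal_sum_of_nonneg (fun k _ => hFnn k x hx)]
            exact ENNReal.ofReal_le_ofReal (hps s)
        _ ≤ (‖D x‖₊ : ℝ≥0∞) := by
            rw [← ENNReal.ofReal_coe_nnreal, coe_nnnorm]
            exact ENNReal.ofReal_le_ofReal (le_abs_self _)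
    have hmono : ∫⁻ x in Ioi (0:ℝ), (∑' k, (‖F k x‖₊ : ℝ≥0∞))
        ≤ ∫⁻ x in Ioi (0:ℝ), (‖D x‖₊ : ℝ≥0∞) :=
      lintegral_mono_ae ((ae_restrict_iff' measurableSet_Ioi).2 (ae_of_all _ hb))
    exact (lt_of_le_of_lt hmono hDint.2).ne
  -- swap
  have hswap : ∑' k : ℕ, ∫ x in Ioi (0:ℝ), F k x = ∫ x in Ioi (0:ℝ), ∑' k, F k x :=
    (integral_tsum (fun k => (hFm k).aestronglyMeasurable) hf').symm
  -- evaluate the integral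
  have hInt1 : IntegrableOn (fun x : ℝ => x ^ ((3.5:ℝ) - 1) * Real.exp (-(3.5 * x))) (Ioi 0) :=
    integrableOn_aux (by norm_num) (by norm_num)
  have hInt2 : IntegrableOn
      (fun x : ℝ => x ^ ((3.5:ℝ) - 1) * Real.exp (-((μ + 3.5) * x))) (Ioi 0) :=
    integrableOn_aux (by norm_num) (by positivity)
  have hsplit : ∀ x ∈ Ioi (0:ℝ), (1 - Real.exp (-(μ * x))) / (μ * x) * D x
      = c / μ * (x ^ ((3.5:ℝ) - 1) * Real.exp (-(3.5 * x)))
        - c / μ * (x ^ ((3.5:ℝ) - 1) * Real.exp (-((μ + 3.5) * x))) := by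
    intro x hx
    have hx0 : (0:ℝ) < x := hx
    have hxr : x ^ ((3.5:ℝ)) = x ^ ((3.5:ℝ) - 1) * x := by
      rw [← Real.rpow_add_one hx0.ne']; norm_num
    have hexp : Real.exp (-((μ + 3.5) * x)) = Real.exp (-(μ * x)) * Real.exp (-(3.5 * x)) := by
      rw [← Real.exp_add]; ring_nf
    simp only [hD, neg_mul]
    rw [hxr, hexp]
    exact algebra_split c μ x _ _ _ hμ.ne' hx0.ne'
  have hval : ∫ x in Ioi (0:ℝ), ∑' k, F k x
      = c / μ * ((1 / 3.5) ^ (3.5:ℝ) * Real.Gamma 3.5)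
        - c / μ * ((1 / (μ + 3.5)) ^ (3.5:ℝ) * Real.Gamma 3.5) := by
    rw [setIntegral_congr_fun measurableSet_Ioi (fun x hx => (hsum x hx).tsum_eq),
        setIntegral_congr_fun measurableSet_Ioi hsplit,
        integral_sub ((hInt1.const_mul _)) ((hInt2.const_mul _)),
        integral_const_mul, integral_const_mul,
        integral_rpow_mul_exp_neg_mul_Ioi (by norm_num : (0:ℝ) < 3.5) (by norm_num : (0:ℝ) < 3.5),
        integral_rpow_mul_exp_neg_mul_Ioi (by norm_num : (0:ℝ) < 3.5) (by positivity : (0:ℝ) < μ + 3.5)]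
  -- final algebra
  have h45 : (3.5:ℝ) ^ (4.5:ℝ) = (3.5:ℝ) ^ (3.5:ℝ) * 3.5 := by
    rw [show (4.5:ℝ) = 3.5 + 1 by norm_num, Real.rpow_add (by norm_num), Real.rpow_one]
  have hA1 : (3.5:ℝ) ^ (3.5:ℝ) * ((1:ℝ)/3.5) ^ (3.5:ℝ) = 1 := by
    rw [← Real.mul_rpow (by norm_num) (by norm_num)]
    norm_num
  have hA2 : (3.5:ℝ) ^ (3.5:ℝ) * ((1:ℝ)/(μ + 3.5)) ^ (3.5:ℝ) = (1 + μ / 3.5) ^ (-(3.5:ℝ)) := by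
    have hb : (0:ℝ) < μ + 3.5 := by positivity
    have hbase : (1:ℝ) + μ / 3.5 = (μ + 3.5) / 3.5 := by ring
    rw [← Real.mul_rpow (by norm_num) (by positivity), hbase,
      Real.rpow_neg (by positivity), ← Real.inv_rpow (by positivity), inv_div, mul_one_div]
  calc ∑' k : ℕ, fK k / (k + 1 : ℝ)
      = ∑' k : ℕ, ∫ x in Ioi (0:ℝ), F k x := tsum_congr hA
    _ = ∫ x in Ioi (0:ℝ), ∑' k, F k x := hswap
    _ = c / μ * ((1 / 3.5) ^ (3.5:ℝ) * Real.Gamma 3.5)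
        - c / μ * ((1 / (μ + 3.5)) ^ (3.5:ℝ) * Real.Gamma 3.5) := hval
    _ = (1 / μ) * (1 - (1 + μ / 3.5) ^ (-(3.5 : ℝ))) := by
        have hc' : c = (3.5:ℝ) ^ (3.5:ℝ) / Real.Gamma 3.5 := by
          rw [hc, hG45, h45, mul_comm (3.5:ℝ) (Real.Gamma 3.5),
            mul_div_mul_right _ _ (by norm_num : (3.5:ℝ) ≠ 0)]
        rw [hc', algebra_cancel _ _ _ _ hΓ.ne' hμ.ne', algebra_cancel _ _ _ _ hΓ.ne' hμ.ne',
          hA1, hA2]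
        ring
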